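/- Let X be a ringed space, N a g-pure-injective O_X-module, and A any O_X-module. Then the sheaf-hom Hom-sheaf 𝓗om_X(A, N) is flasque; in particular N itself is flasque. -/

import Mathlib

open TopologicalSpace CategoryTheory

universe u

namespace SheafPurity

/-! ## Purity for modules over a ring (via finite systems of linear equations) -/

/-- A linear map is a pure monomorphism if it is injective and every finite system of
linear equations with constants in `A` that is solvable in `B` is solvable in `A`. -/
def IsPureMono {R : Type u} [Ring R] {A B : Type u} [AddCommGroup A] [Module R A]
    [AddCommGroup B] [Module R B] (f : A →ₗ[R] B) : Prop :=
  Function.Injective f ∧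
    ∀ (m n : ℕ) (G : Matrix (Fin m) (Fin n) R) (a : Fin m → A) (b : Fin n → B),
      (∀ i, (∑ j, G i j • b j) = f (a i)) →
      ∃ a' : Fin n → A, ∀ i, (∑ j, G i j • a' j) = a i

/-- A module is pure-injective if every morphism to it extends along pure monomorphisms. -/
def PureInjectiveModule (R : Type u) [Ring R] (M : Type u) [AddCommGroup M]
    [Module R M] : Prop :=
  ∀ (A B : Type u) [AddCommGroup A] [Module R A] [AddCommGroup B] [Module R B]
    (f : A →ₗ[R] B), IsPureMono f → ∀ g : A →ₗ[R] M, ∃ h : B →ₗ[R] M, h.comp f = g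

/-! ## Sheaves of rings and sheaves of modules on a topological space -/

variable (X : Type u) [TopologicalSpace X]

/-- The sheaf condition for a family of sections with restriction maps: compatible
families of sections over a cover glue uniquely. -/
def IsSheafFamily (F : Opens X → Type u)
    (res : ∀ (U V : Opens X), V ≤ U → F U → F V) : Prop :=
  ∀ (ι : Type u) (U : Opens X) (V : ι → Opens X) (hU : U = iSup V) (s : ∀ i, F (V i)),
    (∀ (i j : ι) (W : Opens X) (hWi : W ≤ V i) (hWj : W ≤ V j),
      res (V i) W hWi (s i) = res (V j) W hWj (s j)) →
    ∃! t : F U, ∀ i, res U (V i) ((le_iSup V i).trans hU.ge) t = s i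

/-- A sheaf of commutative rings on `X`; `X` together with such a sheaf is a ringed space. -/
structure RingSheaf where
  obj : Opens X → Type u
  ring : ∀ U, CommRing (obj U)
  res : ∀ {U V : Opens X}, V ≤ U → obj U →+* obj V
  res_id : ∀ {U : Opens X} (s : obj U), res le_rfl s = s
  res_res : ∀ {U V W : Opens X} (h1 : W ≤ V) (h2 : V ≤ U) (s : obj U),
    res h1 (res h2 s) = res (h1.trans h2) s
  sheaf : IsSheafFamily X obj fun _ _ h s => res h s

attribute [instance] RingSheaf.ring

variable {X}

/-- A sheaf of `O`-modules on the ringed space `(X, O)`. -/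
structure OMod (O : RingSheaf X) where
  obj : Opens X → Type u
  acg : ∀ U, AddCommGroup (obj U)
  mod : ∀ U, Module (O.obj U) (obj U)
  res : ∀ {U V : Opens X}, V ≤ U → obj U →+ obj V
  res_id : ∀ {U : Opens X} (s : obj U), res le_rfl s = s
  res_res : ∀ {U V W : Opens X} (h1 : W ≤ V) (h2 : V ≤ U) (s : obj U),
    res h1 (res h2 s) = res (h1.trans h2) s
  res_smul : ∀ {U V : Opens X} (h : V ≤ U) (r : O.obj U) (m : obj U),
    res h (r • m) = O.res h r • res h m
  sheaf : IsSheafFamily X obj fun _ _ h s => res h s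

attribute [instance] OMod.acg OMod.mod

variable {O : RingSheaf X}

/-- Morphisms of sheaves of `O`-modules. -/
@[ext]
structure Hom (M N : OMod O) where
  app : ∀ U, M.obj U →ₗ[O.obj U] N.obj U
  naturality : ∀ {U V : Opens X} (h : V ≤ U) (m : M.obj U),
    N.res h (app U m) = app V (M.res h m)

instance : Category (OMod O) where
  Hom M N := Hom M N
  id M := ⟨fun _ => LinearMap.id, fun _ _ => rfl⟩
  comp f g := ⟨fun U => (g.app U).comp (f.app U), fun h m => by
    simp only [LinearMap.comp_apply]
    rw [g.naturality, f.naturality]⟩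
  id_comp f := by apply Hom.ext; rfl
  comp_id f := by apply Hom.ext; rfl
  assoc f g h := by apply Hom.ext; rfl

lemma hom_app {M N : OMod O} (f : M ⟶ N) (U : Opens X) : (f : Hom M N).app U = f.app U := rfl

@[simp] lemma comp_app {M N P : OMod O} (f : M ⟶ N) (g : N ⟶ P) (U : Opens X) (m : M.obj U) :
    (f ≫ g).app U m = g.app U (f.app U m) := rfl

@[simp] lemma id_app (M : OMod O) (U : Opens X) (m : M.obj U) :
    (Hom.app (𝟙 M) U) m = m := rfl

end SheafPurity

namespace SheafPurity

variable {X : Type u} [TopologicalSpace X] {O : RingSheaf X}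

/-! ## Stalks -/

/-- An open neighbourhood of `x`. -/
structure Nbhd (x : X) where
  U : Opens X
  mem : x ∈ U

instance (x : X) : Inhabited (Nbhd x) := ⟨⟨⊤, trivial⟩⟩

/-- Intersection of neighbourhoods. -/
def Nbhd.inf {x : X} (N₁ N₂ : Nbhd x) : Nbhd x := ⟨N₁.U ⊓ N₂.U, ⟨N₁.mem, N₂.mem⟩⟩

lemma Nbhd.inf_le_left {x : X} (N₁ N₂ : Nbhd x) : (N₁.inf N₂).U ≤ N₁.U := _root_.inf_le_left
lemma Nbhd.inf_le_right {x : X} (N₁ N₂ : Nbhd x) : (N₁.inf N₂).U ≤ N₂.U := _root_.inf_le_right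

/-- The germ relation. -/
def germRel (M : OMod O) (x : X) :
    (Σ N : Nbhd x, M.obj N.U) → (Σ N : Nbhd x, M.obj N.U) → Prop :=
  fun a b => ∃ (N : Nbhd x) (h₁ : N.U ≤ a.1.U) (h₂ : N.U ≤ b.1.U),
    M.res h₁ a.2 = M.res h₂ b.2

/-- The stalk of a sheaf of modules at a point. -/
def Stalk (M : OMod O) (x : X) : Type u := Quot (germRel M x)

/-- The germ of a section. -/
def germ {M : OMod O} {x : X} (N : Nbhd x) (s : M.obj N.U) : Stalk M x :=
  Quot.mk _ ⟨N, s⟩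

lemma germ_eq {M : OMod O} {x : X} {N₁ N₂ : Nbhd x} {s₁ : M.obj N₁.U} {s₂ : M.obj N₂.U}
    (N : Nbhd x) (h₁ : N.U ≤ N₁.U) (h₂ : N.U ≤ N₂.U)
    (h : M.res h₁ s₁ = M.res h₂ s₂) : germ N₁ s₁ = germ N₂ s₂ :=
  Quot.sound ⟨N, h₁, h₂, h⟩

lemma germ_res {M : OMod O} {x : X} {N₁ N₂ : Nbhd x} (h : N₂.U ≤ N₁.U) (s : M.obj N₁.U) :
    germ N₂ (M.res h s) = germ N₁ s :=
  germ_eq N₂ le_rfl h (by rw [M.res_id])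

lemma germ_surj {M : OMod O} {x : X} (t : Stalk M x) : ∃ (N : Nbhd x) (s : M.obj N.U), t = germ N s := by
  induction t using Quot.ind with
  | _ a => exact ⟨a.1, a.2, rfl⟩

/-- Lift a binary germ-compatible operation to stalks. -/
def lift₂ {M₁ M₂ : OMod O} {x : X} {γ : Sort*}
    (f : ∀ (N₁ : Nbhd x), M₁.obj N₁.U → ∀ (N₂ : Nbhd x), M₂.obj N₂.U → γ)
    (hl : ∀ N₁ s₁ N₁' s₁' N₂ s₂, germRel M₁ x ⟨N₁, s₁⟩ ⟨N₁', s₁'⟩ →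
      f N₁ s₁ N₂ s₂ = f N₁' s₁' N₂ s₂)
    (hr : ∀ N₁ s₁ N₂ s₂ N₂' s₂', germRel M₂ x ⟨N₂, s₂⟩ ⟨N₂', s₂'⟩ →
      f N₁ s₁ N₂ s₂ = f N₁ s₁ N₂' s₂') :
    Stalk M₁ x → Stalk M₂ x → γ :=
  Quot.lift
    (fun a => Quot.lift (fun b => f a.1 a.2 b.1 b.2)
      (fun b b' hb => hr a.1 a.2 b.1 b.2 b'.1 b'.2 hb))
    (fun a a' ha => funext fun t => by
      induction t using Quot.ind with
      | _ b => exact hl a.1 a.2 a'.1 a'.2 b.1 b.2 ha)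

@[simp] lemma lift₂_germ {M₁ M₂ : OMod O} {x : X} {γ : Sort*}
    (f : ∀ (N₁ : Nbhd x), M₁.obj N₁.U → ∀ (N₂ : Nbhd x), M₂.obj N₂.U → γ) (hl hr)
    (N₁ : Nbhd x) (s₁ : M₁.obj N₁.U) (N₂ : Nbhd x) (s₂ : M₂.obj N₂.U) :
    lift₂ (γ := γ) f hl hr (germ N₁ s₁) (germ N₂ s₂) = f N₁ s₁ N₂ s₂ := rfl

end SheafPurity

namespace SheafPurity

variable {X : Type u} [TopologicalSpace X] {O : RingSheaf X}

protected def Stalk.add {M : OMod O} {x : X} : Stalk M x → Stalk M x → Stalk M x :=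
  lift₂ (fun N₁ s₁ N₂ s₂ => germ (N₁.inf N₂)
      (M.res (N₁.inf_le_left N₂) s₁ + M.res (N₁.inf_le_right N₂) s₂))
    (by
      rintro N₁ s₁ N₁' s₁' N₂ s₂ ⟨W, h₁, h₂, he⟩
      refine germ_eq (W.inf N₂) (show (W.inf N₂).U ≤ (N₁.inf N₂).U from inf_le_inf_right _ h₁)
        (show (W.inf N₂).U ≤ (N₁'.inf N₂).U from inf_le_inf_right _ h₂) ?_
      simp only [map_add, M.res_res]
      congr 1
      rw [← M.res_res (W.inf_le_left N₂) h₁, he, M.res_res])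
    (by
      rintro N₁ s₁ N₂ s₂ N₂' s₂' ⟨W, h₁, h₂, he⟩
      refine germ_eq (N₁.inf W) (show (N₁.inf W).U ≤ (N₁.inf N₂).U from inf_le_inf_left _ h₁)
        (show (N₁.inf W).U ≤ (N₁.inf N₂').U from inf_le_inf_left _ h₂) ?_
      simp only [map_add, M.res_res]
      congr 1
      rw [← M.res_res (N₁.inf_le_right W) h₁, he, M.res_res])

protected def Stalk.neg {M : OMod O} {x : X} : Stalk M x → Stalk M x :=
  Quot.lift (fun a => germ a.1 (-a.2)) (by
    rintro a b ⟨W, h₁, h₂, he⟩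
    exact germ_eq W h₁ h₂ (by simp only [map_neg, he]))

@[simp] lemma add_germ {M : OMod O} {x : X} (N₁ N₂ : Nbhd x) (s₁ : M.obj N₁.U)
    (s₂ : M.obj N₂.U) : Stalk.add (germ N₁ s₁) (germ N₂ s₂) =
      germ (N₁.inf N₂) (M.res (N₁.inf_le_left N₂) s₁ + M.res (N₁.inf_le_right N₂) s₂) := rfl

@[simp] lemma neg_germ {M : OMod O} {x : X} (N : Nbhd x) (s : M.obj N.U) :
    Stalk.neg (germ N s) = germ N (-s) := rfl


section AddGroup
variable {M : OMod O} {x : X}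

set_option maxHeartbeats 1000000 in
lemma stalk_add_assoc (a b c : Stalk M x) :
    Stalk.add (Stalk.add a b) c = Stalk.add a (Stalk.add b c) := by
  obtain ⟨N₁, s₁, rfl⟩ := germ_surj a
  obtain ⟨N₂, s₂, rfl⟩ := germ_surj b
  obtain ⟨N₃, s₃, rfl⟩ := germ_surj c
  simp only [add_germ]
  refine germ_eq ((N₁.inf N₂).inf N₃) le_rfl (le_of_eq (inf_assoc _ _ _)) ?_
  simp only [map_add, M.res_res, add_assoc]

lemma stalk_zero_add (a : Stalk M x) :
    Stalk.add (germ (default : Nbhd x) 0) a = a := by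
  obtain ⟨N, s, rfl⟩ := germ_surj a
  simp only [add_germ]
  refine germ_eq ((default : Nbhd x).inf N) le_rfl (Nbhd.inf_le_right _ _) ?_
  simp only [map_add, map_zero, M.res_res, zero_add]

lemma stalk_add_zero (a : Stalk M x) :
    Stalk.add a (germ (default : Nbhd x) 0) = a := by
  obtain ⟨N, s, rfl⟩ := germ_surj a
  simp only [add_germ]
  refine germ_eq (N.inf (default : Nbhd x)) le_rfl (Nbhd.inf_le_left _ _) ?_
  simp only [map_add, map_zero, M.res_res, add_zero]

lemma stalk_add_comm (a b : Stalk M x) : Stalk.add a b = Stalk.add b a := by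
  obtain ⟨N₁, s₁, rfl⟩ := germ_surj a
  obtain ⟨N₂, s₂, rfl⟩ := germ_surj b
  simp only [add_germ]
  refine germ_eq (N₁.inf N₂) le_rfl (le_of_eq (inf_comm _ _)) ?_
  simp only [map_add, M.res_res, add_comm]

lemma stalk_neg_add_cancel (a : Stalk M x) :
    Stalk.add (Stalk.neg a) a = germ (default : Nbhd x) 0 := by
  obtain ⟨N, s, rfl⟩ := germ_surj a
  simp only [neg_germ, add_germ]
  refine germ_eq (N.inf N) le_rfl le_top ?_
  simp only [map_add, map_neg, map_zero, neg_add_cancel]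

instance : Add (Stalk M x) := ⟨Stalk.add⟩
instance : Neg (Stalk M x) := ⟨Stalk.neg⟩
instance : Zero (Stalk M x) := ⟨germ (default : Nbhd x) 0⟩

instance : AddCommGroup (Stalk M x) where
  add := (· + ·)
  neg := Neg.neg
  zero := 0
  add_assoc := stalk_add_assoc
  zero_add := stalk_zero_add
  add_zero := stalk_add_zero
  add_comm := stalk_add_comm
  neg_add_cancel := stalk_neg_add_cancel
  nsmul := nsmulRec
  nsmul_zero := fun _ => rfl
  nsmul_succ := fun _ _ => rfl
  zsmul := zsmulRec
  zsmul_zero' := fun _ => rfl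
  zsmul_succ' := fun _ _ => rfl
  zsmul_neg' := fun _ _ => rfl

end AddGroup

@[simp] lemma germ_add {M : OMod O} {x : X} (N : Nbhd x) (s t : M.obj N.U) :
    (germ N (s + t) : Stalk M x) = germ N s + germ N t := by
  show _ = Stalk.add _ _
  simp only [add_germ]
  exact germ_eq (N.inf N) (Nbhd.inf_le_left _ _) le_rfl (by simp [map_add, M.res_res])

@[simp] lemma germ_zero {M : OMod O} {x : X} (N : Nbhd x) :
    (germ N (0 : M.obj N.U) : Stalk M x) = 0 := by
  show _ = germ (default : Nbhd x) 0
  exact germ_eq N le_rfl le_top (by simp)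

end SheafPurity

namespace SheafPurity

variable {X : Type u} [TopologicalSpace X] {O : RingSheaf X}

section MoreStalk
variable {M : OMod O} {x : X}

@[simp] lemma add_germ' (N₁ N₂ : Nbhd x) (s₁ : M.obj N₁.U) (s₂ : M.obj N₂.U) :
    germ N₁ s₁ + germ N₂ s₂ =
      germ (N₁.inf N₂) (M.res (N₁.inf_le_left N₂) s₁ + M.res (N₁.inf_le_right N₂) s₂) := rfl

@[simp] lemma neg_germ' (N : Nbhd x) (s : M.obj N.U) :
    -(germ N s) = germ N (-s) := rfl

lemma zero_def : (0 : Stalk M x) = germ (default : Nbhd x) 0 := rfl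

end MoreStalk

/-- A sheaf of rings, regarded as a sheaf of modules over itself. -/
@[reducible] def RingSheaf.toOMod (O : RingSheaf X) : OMod O where
  obj := O.obj
  acg U := inferInstance
  mod U := inferInstance
  res h := (O.res h).toAddMonoidHom
  res_id := O.res_id
  res_res := O.res_res
  res_smul h r m := by simpa [smul_eq_mul] using map_mul (O.res h) r m
  sheaf := O.sheaf

/-- The stalk of the structure sheaf at a point. -/
abbrev RStalk (O : RingSheaf X) (x : X) : Type u := Stalk O.toOMod x

section RingStalk

variable {x : X}

@[simp] lemma rh_apply {α β : Type u} [NonAssocSemiring α] [NonAssocSemiring β]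
    (f : α →+* β) (a : α) : f.toAddMonoidHom a = f a := rfl

@[simp] lemma toOMod_res {U V : Opens X} (h : V ≤ U) (s : O.obj U) :
    O.toOMod.res h s = O.res h s := rfl

protected def RStalk.mul : RStalk O x → RStalk O x → RStalk O x :=
  lift₂ (fun N₁ s₁ N₂ s₂ => germ (N₁.inf N₂)
      (O.res (N₁.inf_le_left N₂) s₁ * O.res (N₁.inf_le_right N₂) s₂))
    (by
      rintro N₁ s₁ N₁' s₁' N₂ s₂ ⟨W, h₁, h₂, he⟩
      refine germ_eq (W.inf N₂) (show (W.inf N₂).U ≤ (N₁.inf N₂).U from inf_le_inf_right _ h₁)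
        (show (W.inf N₂).U ≤ (N₁'.inf N₂).U from inf_le_inf_right _ h₂) ?_
      have he' : O.res h₁ s₁ = O.res h₂ s₁' := he
      show O.res _ _ = O.res _ _
      simp only [map_mul, O.res_res]
      congr 1
      rw [← O.res_res (W.inf_le_left N₂) h₁, he', O.res_res])
    (by
      rintro N₁ s₁ N₂ s₂ N₂' s₂' ⟨W, h₁, h₂, he⟩
      refine germ_eq (N₁.inf W) (show (N₁.inf W).U ≤ (N₁.inf N₂).U from inf_le_inf_left _ h₁)
        (show (N₁.inf W).U ≤ (N₁.inf N₂').U from inf_le_inf_left _ h₂) ?_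
      have he' : O.res h₁ s₂ = O.res h₂ s₂' := he
      show O.res _ _ = O.res _ _
      simp only [map_mul, O.res_res]
      congr 1
      rw [← O.res_res (N₁.inf_le_right W) h₁, he', O.res_res])

instance : Mul (RStalk O x) := ⟨RStalk.mul⟩
instance : One (RStalk O x) := ⟨germ (M := O.toOMod) (default : Nbhd x) 1⟩

@[simp] lemma mul_germ (N₁ N₂ : Nbhd x) (s₁ : O.obj N₁.U) (s₂ : O.obj N₂.U) :
    (germ (M := O.toOMod) N₁ s₁) * (germ (M := O.toOMod) N₂ s₂) =
      germ (N₁.inf N₂) (O.res (N₁.inf_le_left N₂) s₁ * O.res (N₁.inf_le_right N₂) s₂) := rfl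

lemma one_def : (1 : RStalk O x) = germ (M := O.toOMod) (default : Nbhd x) 1 := rfl


section RingAx
variable {x : X}

lemma r_mul_assoc (a b c : RStalk O x) : a * b * c = a * (b * c) := by
  obtain ⟨N₁, s₁, rfl⟩ := germ_surj a
  obtain ⟨N₂, s₂, rfl⟩ := germ_surj b
  obtain ⟨N₃, s₃, rfl⟩ := germ_surj c
  simp only [mul_germ]
  refine germ_eq ((N₁.inf N₂).inf N₃) le_rfl (le_of_eq (inf_assoc _ _ _)) ?_
  simp only [rh_apply, map_mul, O.res_res, mul_assoc]

lemma r_one_mul (a : RStalk O x) : 1 * a = a := by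
  obtain ⟨N, s, rfl⟩ := germ_surj a
  rw [one_def]
  simp only [mul_germ]
  refine germ_eq ((default : Nbhd x).inf N) le_rfl (Nbhd.inf_le_right _ _) ?_
  simp only [rh_apply, map_mul, map_one, O.res_res, one_mul]

lemma r_mul_comm (a b : RStalk O x) : a * b = b * a := by
  obtain ⟨N₁, s₁, rfl⟩ := germ_surj a
  obtain ⟨N₂, s₂, rfl⟩ := germ_surj b
  simp only [mul_germ]
  refine germ_eq (N₁.inf N₂) le_rfl (le_of_eq (inf_comm _ _)) ?_
  simp only [rh_apply, map_mul, O.res_res, mul_comm]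

lemma r_mul_one (a : RStalk O x) : a * 1 = a := by
  rw [r_mul_comm, r_one_mul]

lemma r_left_distrib (a b c : RStalk O x) : a * (b + c) = a * b + a * c := by
  obtain ⟨N₁, s₁, rfl⟩ := germ_surj a
  obtain ⟨N₂, s₂, rfl⟩ := germ_surj b
  obtain ⟨N₃, s₃, rfl⟩ := germ_surj c
  simp only [add_germ' (M := O.toOMod), mul_germ]
  refine germ_eq (N₁.inf (N₂.inf N₃)) le_rfl
    (show (N₁.inf (N₂.inf N₃)).U ≤ ((N₁.inf N₂).inf (N₁.inf N₃)).U from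
    le_inf (inf_le_inf_left _ (Nbhd.inf_le_left _ _))
      (inf_le_inf_left _ (Nbhd.inf_le_right _ _))) ?_
  simp only [rh_apply, map_mul, map_add, O.res_res, mul_add]

lemma r_right_distrib (a b c : RStalk O x) : (a + b) * c = a * c + b * c := by
  rw [r_mul_comm, r_left_distrib, r_mul_comm c a, r_mul_comm c b]

lemma r_zero_mul (a : RStalk O x) : 0 * a = 0 := by
  obtain ⟨N, s, rfl⟩ := germ_surj a
  rw [zero_def]
  simp only [mul_germ]
  refine germ_eq ((default : Nbhd x).inf N) le_rfl le_top ?_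
  simp only [rh_apply, map_mul, map_zero, zero_mul]

lemma r_mul_zero (a : RStalk O x) : a * 0 = 0 := by
  rw [r_mul_comm, r_zero_mul]

instance : CommRing (RStalk O x) where
  __ := (inferInstance : AddCommGroup (Stalk (O.toOMod) x))
  mul := (· * ·)
  one := 1
  mul_assoc := r_mul_assoc
  one_mul := r_one_mul
  mul_one := r_mul_one
  mul_comm := r_mul_comm
  left_distrib := r_left_distrib
  right_distrib := r_right_distrib
  zero_mul := r_zero_mul
  mul_zero := r_mul_zero

end RingAx

/-- The germ map for the structure sheaf, as a ring homomorphism. -/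
def RingSheaf.germHom (O : RingSheaf X) {x : X} (N : Nbhd x) : O.obj N.U →+* RStalk O x where
  toFun s := germ (M := O.toOMod) N s
  map_one' := by
    rw [one_def]
    exact germ_eq N le_rfl le_top (by simp only [rh_apply, map_one])
  map_mul' r s := by
    show germ (M := O.toOMod) N (r * s) = germ (M := O.toOMod) N r * germ (M := O.toOMod) N s
    rw [mul_germ]
    exact germ_eq (N.inf N) (Nbhd.inf_le_left _ _) le_rfl
      (by simp only [rh_apply, map_mul, O.res_res])
  map_zero' := by
    show germ (M := O.toOMod) N 0 = 0
    exact germ_zero (M := O.toOMod) N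
  map_add' r s := by
    show germ (M := O.toOMod) N (r + s) = germ (M := O.toOMod) N r + germ (M := O.toOMod) N s
    exact germ_add (M := O.toOMod) N r s

@[simp] lemma germHom_apply {x : X} (N : Nbhd x) (s : O.obj N.U) :
    O.germHom N s = germ (M := O.toOMod) N s := rfl

lemma germ_res_ring {x : X} {N₁ N₂ : Nbhd x} (h : N₂.U ≤ N₁.U) (s : O.obj N₁.U) :
    germ (M := O.toOMod) N₂ (O.res h s) = germ (M := O.toOMod) N₁ s :=
  germ_res (M := O.toOMod) h s

end RingStalk

end SheafPurity

namespace SheafPurity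

variable {X : Type u} [TopologicalSpace X] {O : RingSheaf X}

section ModuleStalk

variable {M : OMod O} {x : X}

protected def Stalk.smul : RStalk O x → Stalk M x → Stalk M x :=
  lift₂ (fun N₁ r N₂ s => germ (N₁.inf N₂)
      (O.res (N₁.inf_le_left N₂) r • M.res (N₁.inf_le_right N₂) s))
    (by
      rintro N₁ r N₁' r' N₂ s ⟨W, h₁, h₂, he⟩
      refine germ_eq (W.inf N₂) (show (W.inf N₂).U ≤ (N₁.inf N₂).U from inf_le_inf_right _ h₁)
        (show (W.inf N₂).U ≤ (N₁'.inf N₂).U from inf_le_inf_right _ h₂) ?_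
      have he' : O.res h₁ r = O.res h₂ r' := he
      simp only [map_add, M.res_smul, M.res_res, O.res_res]
      congr 1
      rw [← O.res_res (W.inf_le_left N₂) h₁, he', O.res_res])
    (by
      rintro N₁ r N₂ s N₂' s' ⟨W, h₁, h₂, he⟩
      refine germ_eq (N₁.inf W) (show (N₁.inf W).U ≤ (N₁.inf N₂).U from inf_le_inf_left _ h₁)
        (show (N₁.inf W).U ≤ (N₁.inf N₂').U from inf_le_inf_left _ h₂) ?_
      simp only [M.res_smul, M.res_res, O.res_res]
      congr 1
      rw [← M.res_res (N₁.inf_le_right W) h₁, he, M.res_res])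

instance : SMul (RStalk O x) (Stalk M x) := ⟨Stalk.smul⟩

@[simp] lemma smul_germ (N₁ N₂ : Nbhd x) (r : O.obj N₁.U) (s : M.obj N₂.U) :
    (germ (M := O.toOMod) N₁ r) • (germ N₂ s) =
      germ (N₁.inf N₂) (O.res (N₁.inf_le_left N₂) r • M.res (N₁.inf_le_right N₂) s) := rfl

lemma st_one_smul (a : Stalk M x) : (1 : RStalk O x) • a = a := by
  obtain ⟨N, s, rfl⟩ := germ_surj a
  rw [one_def]
  simp only [smul_germ]
  refine germ_eq ((default : Nbhd x).inf N) le_rfl (Nbhd.inf_le_right _ _) ?_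
  simp only [M.res_smul, M.res_res, map_one, one_smul]

lemma st_mul_smul (r t : RStalk O x) (a : Stalk M x) : (r * t) • a = r • t • a := by
  obtain ⟨N₁, r, rfl⟩ := germ_surj r
  obtain ⟨N₂, t, rfl⟩ := germ_surj t
  obtain ⟨N₃, s, rfl⟩ := germ_surj a
  simp only [mul_germ, smul_germ]
  refine germ_eq ((N₁.inf N₂).inf N₃) le_rfl (le_of_eq (inf_assoc _ _ _)) ?_
  simp only [rh_apply, M.res_smul, M.res_res, O.res_res, map_mul, mul_smul]

lemma st_smul_add (r : RStalk O x) (a b : Stalk M x) : r • (a + b) = r • a + r • b := by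
  obtain ⟨N₁, rr, rfl⟩ := germ_surj r
  obtain ⟨N₂, s, rfl⟩ := germ_surj a
  obtain ⟨N₃, t, rfl⟩ := germ_surj b
  simp only [add_germ', smul_germ]
  refine germ_eq (N₁.inf (N₂.inf N₃)) le_rfl
    (show (N₁.inf (N₂.inf N₃)).U ≤ ((N₁.inf N₂).inf (N₁.inf N₃)).U from
    le_inf (inf_le_inf_left _ (Nbhd.inf_le_left _ _))
      (inf_le_inf_left _ (Nbhd.inf_le_right _ _))) ?_
  simp only [rh_apply, M.res_smul, M.res_res, O.res_res, map_add, smul_add]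

lemma st_smul_zero (r : RStalk O x) : r • (0 : Stalk M x) = 0 := by
  obtain ⟨N, rr, rfl⟩ := germ_surj r
  rw [zero_def]
  simp only [smul_germ]
  refine germ_eq (N.inf (default : Nbhd x)) le_rfl le_top ?_
  simp only [map_zero, smul_zero]

lemma st_add_smul (r t : RStalk O x) (a : Stalk M x) : (r + t) • a = r • a + t • a := by
  obtain ⟨N₁, rr, rfl⟩ := germ_surj r
  obtain ⟨N₂, tt, rfl⟩ := germ_surj t
  obtain ⟨N₃, s, rfl⟩ := germ_surj a
  simp only [add_germ', smul_germ]
  refine germ_eq ((N₁.inf N₂).inf N₃) le_rfl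
    (show ((N₁.inf N₂).inf N₃).U ≤ ((N₁.inf N₃).inf (N₂.inf N₃)).U from
    le_inf (inf_le_inf_right _ (Nbhd.inf_le_left _ _))
      (inf_le_inf_right _ (Nbhd.inf_le_right _ _))) ?_
  simp only [rh_apply, M.res_smul, M.res_res, O.res_res, map_add, add_smul]

lemma st_zero_smul (a : Stalk M x) : (0 : RStalk O x) • a = 0 := by
  obtain ⟨N, s, rfl⟩ := germ_surj a
  rw [zero_def]
  simp only [smul_germ]
  refine germ_eq ((default : Nbhd x).inf N) le_rfl le_top ?_
  simp only [rh_apply, map_zero, zero_smul]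

instance : Module (RStalk O x) (Stalk M x) where
  smul := (· • ·)
  one_smul := st_one_smul
  mul_smul := st_mul_smul
  smul_add := st_smul_add
  smul_zero := st_smul_zero
  add_smul := st_add_smul
  zero_smul := st_zero_smul

lemma germ_smul (N : Nbhd x) (r : O.obj N.U) (s : M.obj N.U) :
    (germ N (r • s) : Stalk M x) = O.germHom N r • germ N s := by
  rw [germHom_apply]
  simp only [smul_germ]
  exact germ_eq (N.inf N) (Nbhd.inf_le_left _ _) le_rfl
    (by simp only [M.res_smul, M.res_res, O.res_res, rh_apply])

end ModuleStalk

/-- The underlying function of the map induced on stalks by a morphism. -/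
def stalkMapFun {M N : OMod O} (f : Hom M N) (x : X) : Stalk M x → Stalk N x :=
  Quot.lift (fun a => germ a.1 (f.app _ a.2)) (by
    rintro a b ⟨W, h₁, h₂, he⟩
    refine germ_eq W h₁ h₂ ?_
    rw [f.naturality, f.naturality, he])

@[simp] lemma stalkMapFun_germ {M N : OMod O} (f : Hom M N) (x : X)
    (Nb : Nbhd x) (s : M.obj Nb.U) :
    stalkMapFun f x (germ Nb s) = germ Nb (f.app Nb.U s) := rfl

/-- The map induced on stalks by a morphism of sheaves of modules, as a linear map
over the stalk of the structure sheaf. -/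
def stalkMap {M N : OMod O} (f : M ⟶ N) (x : X) : Stalk M x →ₗ[RStalk O x] Stalk N x where
  toFun := stalkMapFun f x
  map_add' a b := by
    obtain ⟨N₁, s₁, rfl⟩ := germ_surj a
    obtain ⟨N₂, s₂, rfl⟩ := germ_surj b
    simp only [add_germ', stalkMapFun_germ]
    refine germ_eq (N₁.inf N₂) le_rfl le_rfl ?_
    simp only [map_add, N.res_res, M.res_res, Hom.naturality]
  map_smul' r a := by
    obtain ⟨N₁, rr, rfl⟩ := germ_surj r
    obtain ⟨N₂, s, rfl⟩ := germ_surj a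
    simp only [smul_germ, stalkMapFun_germ, RingHom.id_apply]
    refine germ_eq (N₁.inf N₂) le_rfl le_rfl ?_
    simp only [map_smul, N.res_smul, M.res_res, N.res_res, O.res_res, Hom.naturality]

@[simp] lemma stalkMap_germ {M N : OMod O} (f : M ⟶ N) (x : X) (Nb : Nbhd x) (s : M.obj Nb.U) :
    stalkMap f x (germ Nb s) = germ Nb ((f : Hom M N).app Nb.U s) := rfl

/-! ## Geometric purity -/

/-- A morphism of sheaves of modules is a geometrically pure monomorphism if it is a
monomorphism (i.e. injective on sections) and the induced map on every stalk is a pure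
monomorphism of modules over the stalk ring. -/
def IsGPureMono {M N : OMod O} (f : M ⟶ N) : Prop :=
  (∀ U, Function.Injective ((f : Hom M N).app U)) ∧
    ∀ x : X, IsPureMono (stalkMap f x)

/-- A sheaf of modules is geometrically pure-injective if every morphism to it extends
along every geometrically pure monomorphism. -/
def GPureInjective (P : OMod O) : Prop :=
  ∀ (M N : OMod O) (f : M ⟶ N), IsGPureMono f →
    ∀ φ : M ⟶ P, ∃ ψ : N ⟶ P, f ≫ ψ = φ

end SheafPurity

namespace SheafPurity

variable {X : Type u} [TopologicalSpace X] {O : RingSheaf X}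

/-! ## Skyscraper sheaves -/

section Sky

variable (x : X) (A : Type u) [AddCommGroup A] [Module (RStalk O x) A]

/-- The module structure on the sections of the skyscraper sheaf. -/
def skyModule (U : Opens X) : Module (O.obj U) (PLift (x ∈ U) → A) where
  smul r f := fun h => (O.germHom ⟨U, h.down⟩ r) • f h
  one_smul f := funext fun h => by
    show O.germHom ⟨U, h.down⟩ 1 • f h = f h
    simp
  mul_smul r t f := funext fun h => by
    show O.germHom ⟨U, h.down⟩ (r * t) • f h =
      O.germHom ⟨U, h.down⟩ r • O.germHom ⟨U, h.down⟩ t • f h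
    rw [map_mul, mul_smul]
  smul_zero r := funext fun h => by
    show O.germHom ⟨U, h.down⟩ r • (0 : A) = 0
    simp
  smul_add r f g := funext fun h => by
    show O.germHom ⟨U, h.down⟩ r • (f h + g h) =
      O.germHom ⟨U, h.down⟩ r • f h + O.germHom ⟨U, h.down⟩ r • g h
    rw [smul_add]
  add_smul r t f := funext fun h => by
    show O.germHom ⟨U, h.down⟩ (r + t) • f h =
      O.germHom ⟨U, h.down⟩ r • f h + O.germHom ⟨U, h.down⟩ t • f h
    rw [map_add, add_smul]
  zero_smul f := funext fun h => by
    show O.germHom ⟨U, h.down⟩ 0 • f h = 0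
    simp

/-- The skyscraper sheaf at `x` with value the `RStalk O x`-module `A`. -/
def sky : OMod O where
  obj U := PLift (x ∈ U) → A
  acg U := inferInstance
  mod U := skyModule x A U
  res {U V} h :=
    { toFun := fun f hv => f ⟨h hv.down⟩
      map_zero' := rfl
      map_add' := fun _ _ => rfl }
  res_id _ := rfl
  res_res _ _ _ := rfl
  res_smul {U V} h r f := by
    funext hv
    show O.germHom ⟨U, h hv.down⟩ r • f ⟨h hv.down⟩ =
      O.germHom ⟨V, hv.down⟩ (O.res h r) • f ⟨h hv.down⟩
    rw [show O.germHom (x := x) ⟨V, hv.down⟩ (O.res h r) = O.germHom ⟨U, h hv.down⟩ r from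
      germ_res_ring (N₁ := ⟨U, h hv.down⟩) (N₂ := ⟨V, hv.down⟩) h r]
  sheaf := by
    intro ι U V hU s compat
    have mem : ∀ (h : x ∈ U), ∃ i, x ∈ V i := fun h => Opens.mem_iSup.mp (hU ▸ h)
    refine ⟨fun h => s (mem h.down).choose ⟨(mem h.down).choose_spec⟩,
      fun i => funext fun hv => ?_, ?_⟩
    · have hU' : x ∈ U := ((le_iSup V i).trans hU.ge) hv.down
      exact congrFun (compat (mem hU').choose i (V (mem hU').choose ⊓ V i)
        inf_le_left inf_le_right) ⟨⟨(mem hU').choose_spec, hv.down⟩⟩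
    · intro y hy
      funext h
      obtain ⟨i, hi⟩ := mem h.down
      have h1 : y h = s i ⟨hi⟩ := congrFun (hy i) ⟨hi⟩
      have h2 : s (mem h.down).choose ⟨(mem h.down).choose_spec⟩ = s i ⟨hi⟩ :=
        congrFun (compat _ i (V (mem h.down).choose ⊓ V i) inf_le_left inf_le_right)
          ⟨⟨(mem h.down).choose_spec, hi⟩⟩
      rw [h1, h2]

end Sky

/-- Functoriality of the skyscraper sheaf. -/
def skyMap {x : X} {A B : Type u} [AddCommGroup A] [Module (RStalk O x) A]
    [AddCommGroup B] [Module (RStalk O x) B] (φ : A →ₗ[RStalk O x] B) :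
    (sky x A : OMod O) ⟶ (sky x B : OMod O) where
  app U :=
    { toFun := fun f h => φ (f h)
      map_add' := fun f g => funext fun h => by
        show φ (f h + g h) = φ (f h) + φ (g h)
        rw [map_add]
      map_smul' := fun r f => funext fun h => by
        show φ (O.germHom ⟨U, h.down⟩ r • f h) = O.germHom ⟨U, h.down⟩ r • φ (f h)
        rw [map_smul] }
  naturality _ _ := rfl

/-- The skyscraper sheaf functor. -/
def skyFunctor (O : RingSheaf X) (x : X) : ModuleCat.{u} (RStalk O x) ⥤ OMod O where
  obj A := sky x A
  map φ := skyMap φ.hom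
  map_id A := rfl
  map_comp φ ψ := rfl

end SheafPurity

namespace SheafPurity

variable {X : Type u} [TopologicalSpace X] {O : RingSheaf X}

/-! ## Direct image along the inclusion of an open subset -/

/-- The direct image `ι_{U,*}(M|_U)` of the restriction of `M` to an open set `U`:
its sections over `V` are the sections of `M` over `U ⊓ V`. -/
def pushforwardInto (U : Opens X) (M : OMod O) : OMod O where
  obj V := M.obj (U ⊓ V)
  acg V := inferInstance
  mod V := Module.compHom _ (O.res (inf_le_right : U ⊓ V ≤ V))
  res {V W} h := M.res (inf_le_inf_left U h)
  res_id s := M.res_id s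
  res_res h1 h2 s := M.res_res _ _ s
  res_smul {V W} h r m := by
    show M.res (inf_le_inf_left U h) (O.res (inf_le_right : U ⊓ V ≤ V) r • m) =
      O.res (inf_le_right : U ⊓ W ≤ W) (O.res h r) • M.res (inf_le_inf_left U h) m
    rw [M.res_smul, O.res_res, O.res_res]
  sheaf := by
    intro ι V₀ V hV s compat
    obtain ⟨t, ht, huniq⟩ := M.sheaf ι (U ⊓ V₀) (fun i => U ⊓ V i)
      (by rw [hV, inf_iSup_eq]) s
      (by
        intro i j W hWi hWj
        have hW : W ≤ U ⊓ (V i ⊓ V j) :=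
          le_inf (hWi.trans inf_le_left)
            (le_inf (hWi.trans inf_le_right) (hWj.trans inf_le_right))
        calc M.res hWi (s i)
            = M.res hW (M.res (inf_le_inf_left U inf_le_left) (s i)) := by
              rw [M.res_res]
          _ = M.res hW (M.res (inf_le_inf_left U inf_le_right) (s j)) :=
              congrArg (M.res hW) (compat i j (V i ⊓ V j) inf_le_left inf_le_right)
          _ = M.res hWj (s j) := by rw [M.res_res])
    exact ⟨t, fun i => ht i, fun y hy => huniq y fun i => hy i⟩

/-- The unit morphism `M ⟶ ι_{U,*}(M|_U)`, given by restriction of sections. -/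
def pushforwardUnit (U : Opens X) (M : OMod O) : M ⟶ pushforwardInto U M where
  app V :=
    { toFun := fun m => M.res (inf_le_right : U ⊓ V ≤ V) m
      map_add' := fun _ _ => map_add _ _ _
      map_smul' := fun r m => by
        show M.res (inf_le_right : U ⊓ V ≤ V) (r • m) = O.res (inf_le_right : U ⊓ V ≤ V) r •
          M.res (inf_le_right : U ⊓ V ≤ V) m
        rw [M.res_smul] }
  naturality {V W} h m := by
    show M.res _ (M.res _ m) = M.res _ (M.res _ m)
    rw [M.res_res, M.res_res]

/-! ## Binary products -/

/-- The binary product of two sheaves of modules. -/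
def prod2 (M N : OMod O) : OMod O where
  obj U := M.obj U × N.obj U
  acg U := inferInstance
  mod U := inferInstance
  res {U V} h := (M.res h).prodMap (N.res h)
  res_id s := Prod.ext (M.res_id s.1) (N.res_id s.2)
  res_res h1 h2 s := Prod.ext (M.res_res h1 h2 s.1) (N.res_res h1 h2 s.2)
  res_smul h r m := Prod.ext (M.res_smul h r m.1) (N.res_smul h r m.2)
  sheaf := by
    intro ι U V hU s compat
    obtain ⟨t₁, ht₁, hu₁⟩ := M.sheaf ι U V hU (fun i => (s i).1)
      (fun i j W hWi hWj => congrArg Prod.fst (compat i j W hWi hWj))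
    obtain ⟨t₂, ht₂, hu₂⟩ := N.sheaf ι U V hU (fun i => (s i).2)
      (fun i j W hWi hWj => congrArg Prod.snd (compat i j W hWi hWj))
    refine ⟨(t₁, t₂), fun i => ?_, fun y hy => ?_⟩
    · exact Prod.ext (ht₁ i) (ht₂ i)
    · have h₁ : y.1 = t₁ := hu₁ y.1 fun i => congrArg Prod.fst (hy i)
      have h₂ : y.2 = t₂ := hu₂ y.2 fun i => congrArg Prod.snd (hy i)
      exact Prod.ext h₁ h₂

/-- A sheaf of modules is trivial (zero) if all its section modules are trivial. -/
def IsZeroOMod (M : OMod O) : Prop := ∀ U, Subsingleton (M.obj U)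

/-- An isomorphism of sheaves of modules. -/
structure OModIso (M N : OMod O) where
  hom : M ⟶ N
  inv : N ⟶ M
  hom_inv : hom ≫ inv = 𝟙 M
  inv_hom : inv ≫ hom = 𝟙 N

/-- A sheaf of modules is indecomposable if it is nonzero and in any direct sum
decomposition one of the summands is zero. -/
def IndecomposableOMod (M : OMod O) : Prop :=
  (¬ IsZeroOMod M) ∧
    ∀ (A B : OMod O), Nonempty (OModIso M (prod2 A B)) → IsZeroOMod A ∨ IsZeroOMod B

/-- The canonical morphism from `M` to the skyscraper at `x` with value the stalk `M_x`. -/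
def toSkyStalk (M : OMod O) (x : X) : M ⟶ (sky x (Stalk M x) : OMod O) where
  app U :=
    { toFun := fun m h => germ ⟨U, h.down⟩ m
      map_add' := fun m₁ m₂ => funext fun h => germ_add _ _ _
      map_smul' := fun r m => funext fun h => by
        show germ ⟨U, h.down⟩ (r • m) = O.germHom ⟨U, h.down⟩ r • germ ⟨U, h.down⟩ m
        exact germ_smul _ _ _ }
  naturality {U V} h m := by
    funext hv
    show germ ⟨U, h hv.down⟩ m = germ ⟨V, hv.down⟩ (M.res h m)
    exact (germ_res (N₁ := ⟨U, h hv.down⟩) (N₂ := ⟨V, hv.down⟩) h m).symm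

end SheafPurity

namespace SheafPurity

variable {X : Type u} [TopologicalSpace X] {O : RingSheaf X}

/-- A morphism `M|_U ⟶ N|_U` between the restrictions of two sheaves of modules to an
open set `U`: the sections over `U` of the sheaf hom `𝓗om(M, N)`. -/
structure HomOver (U : Opens X) (M N : OMod O) where
  app : ∀ (V : Opens X), V ≤ U → (M.obj V →ₗ[O.obj V] N.obj V)
  naturality : ∀ {V W : Opens X} (hVU : V ≤ U) (hWV : W ≤ V) (m : M.obj V),
    N.res hWV (app V hVU m) = app W (hWV.trans hVU) (M.res hWV m)

end SheafPurity


namespace SheafPurity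

variable {X : Type u} [TopologicalSpace X] {O : RingSheaf X}

/-! ### Auxiliary lemmas for the proof of Statement 8 -/

/-- Restriction along a composite path. Proof irrelevance lets us use any proof. -/
lemma res₂ (M : OMod O) {W₁ W₂ W₃ : Opens X} (h1 : W₃ ≤ W₂) (h2 : W₂ ≤ W₁)
    (h3 : W₃ ≤ W₁) (s : M.obj W₁) : M.res h1 (M.res h2 s) = M.res h3 s :=
  (M.res_res h1 h2 s).trans rfl

/-- Sections agreeing on a cover are equal (separation). -/
lemma res_eq_of_cover (M : OMod O) {ι : Type u} {W : Opens X} (V : ι → Opens X)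
    (hW : W = iSup V) {n₁ n₂ : M.obj W}
    (h : ∀ i, M.res ((le_iSup V i).trans hW.ge) n₁ = M.res ((le_iSup V i).trans hW.ge) n₂) :
    n₁ = n₂ := by
  obtain ⟨t, _, hu⟩ := M.sheaf ι W V hW (fun i => M.res ((le_iSup V i).trans hW.ge) n₂)
    (fun i j W' hWi hWj => by
      show M.res hWi (M.res ((le_iSup V i).trans hW.ge) n₂) =
        M.res hWj (M.res ((le_iSup V j).trans hW.ge) n₂)
      rw [M.res_res, M.res_res])
  exact (hu n₁ h).trans (hu n₂ fun i => rfl).symm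

lemma germRel_equivalence (M : OMod O) (x : X) : Equivalence (germRel M x) where
  refl a := ⟨a.1, le_rfl, le_rfl, rfl⟩
  symm := fun ⟨W, h1, h2, e⟩ => ⟨W, h2, h1, e.symm⟩
  trans := by
    rintro a b c ⟨W, h1, h2, e⟩ ⟨W', h1', h2', e'⟩
    refine ⟨W.inf W', (W.inf_le_left W').trans h1, (W.inf_le_right W').trans h2', ?_⟩
    rw [← res₂ M (W.inf_le_left W') h1 ((W.inf_le_left W').trans h1) a.2, e,
        res₂ M (W.inf_le_left W') h2 ((W.inf_le_left W').trans h2) b.2,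
        ← res₂ M (W.inf_le_right W') h1' ((W.inf_le_left W').trans h2) b.2, e',
        res₂ M (W.inf_le_right W') h2' ((W.inf_le_right W').trans h2') c.2]

lemma exists_of_germ_eq {M : OMod O} {x : X} {N₁ N₂ : Nbhd x} {s₁ : M.obj N₁.U}
    {s₂ : M.obj N₂.U} (h : (germ N₁ s₁ : Stalk M x) = germ N₂ s₂) :
    ∃ (W : Nbhd x) (h₁ : W.U ≤ N₁.U) (h₂ : W.U ≤ N₂.U), M.res h₁ s₁ = M.res h₂ s₂ :=
  ((germRel_equivalence M x).eqvGen_iff.mp (Quot.eq.mp h) :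
    germRel M x ⟨N₁, s₁⟩ ⟨N₂, s₂⟩)

lemma isPureMono_of_bijective {R : Type u} [Ring R] {A B : Type u} [AddCommGroup A]
    [Module R A] [AddCommGroup B] [Module R B] {f : A →ₗ[R] B}
    (hf : Function.Bijective f) : IsPureMono f := by
  refine ⟨hf.1, fun m n G a b hb => ?_⟩
  choose a' ha' using fun j => hf.2 (b j)
  refine ⟨a', fun i => hf.1 ?_⟩
  rw [map_sum]
  simp only [map_smul, ha']
  exact hb i

lemma isPureMono_of_subsingleton {R : Type u} [Ring R] {A B : Type u} [AddCommGroup A]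
    [Module R A] [AddCommGroup B] [Module R B] [Subsingleton A] (f : A →ₗ[R] B) :
    IsPureMono f :=
  ⟨fun _ _ _ => Subsingleton.elim _ _,
   fun _ _ _ a _ _ => ⟨fun _ => 0, fun i => Subsingleton.elim _ (a i)⟩⟩

/-! ### Extension by zero, modelled as the subsheaf of sections supported in `U` -/

/-- A section of `A` over `W` is *supported in `U`* if every point of `W` has a
neighbourhood which is either contained in `U` or on which the section vanishes. -/
def suppCond (U : Opens X) (A : OMod O) {W : Opens X} (s : A.obj W) : Prop :=
  ∀ x ∈ W, ∃ P : Opens X, x ∈ P ∧ ∃ hPW : P ≤ W, P ≤ U ∨ A.res hPW s = 0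

lemma suppCond_res {U : Opens X} {A : OMod O} {W V : Opens X} (h : V ≤ W) {s : A.obj W}
    (hs : suppCond U A s) : suppCond U A (A.res h s) := by
  intro x hx
  obtain ⟨P, hxP, hPW, hP⟩ := hs x (h hx)
  refine ⟨P ⊓ V, ⟨hxP, hx⟩, inf_le_right, ?_⟩
  rcases hP with h1 | h1
  · exact Or.inl (inf_le_left.trans h1)
  · refine Or.inr ?_
    rw [res₂ A inf_le_right h (inf_le_left.trans hPW) s,
        ← res₂ A inf_le_left hPW (inf_le_left.trans hPW) s, h1, map_zero]

/-- The submodule of sections supported in `U`. -/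
def suppSub (U : Opens X) (A : OMod O) (W : Opens X) : Submodule (O.obj W) (A.obj W) where
  carrier := {s | suppCond U A s}
  zero_mem' := fun x hx => ⟨W, hx, le_rfl, Or.inr (map_zero _)⟩
  add_mem' := by
    intro s t hs ht x hx
    obtain ⟨P₁, hx1, hP1, h1⟩ := hs x hx
    obtain ⟨P₂, hx2, hP2, h2⟩ := ht x hx
    refine ⟨P₁ ⊓ P₂, ⟨hx1, hx2⟩, inf_le_left.trans hP1, ?_⟩
    rcases h1 with h1 | h1
    · exact Or.inl (inf_le_left.trans h1)
    rcases h2 with h2 | h2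
    · exact Or.inl (inf_le_right.trans h2)
    refine Or.inr ?_
    rw [map_add, ← res₂ A inf_le_left hP1 (inf_le_left.trans hP1) s, h1,
        ← res₂ A inf_le_right hP2 (inf_le_left.trans hP1) t, h2, map_zero, map_zero, add_zero]
  smul_mem' := by
    intro c s hs x hx
    obtain ⟨P, hxP, hPW, hP⟩ := hs x hx
    refine ⟨P, hxP, hPW, hP.imp_right fun h0 => ?_⟩
    rw [A.res_smul, h0, smul_zero]

lemma mem_suppSub {U : Opens X} {A : OMod O} {W : Opens X} {s : A.obj W} :
    s ∈ suppSub U A W ↔ suppCond U A s := Iff.rfl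

/-- The subsheaf of `A` of sections supported in `U`; a model for `ι_{U,!}(A|_U)`. -/
def shriek (U : Opens X) (A : OMod O) : OMod O where
  obj W := suppSub U A W
  acg W := inferInstance
  mod W := inferInstance
  res {W V} h :=
    { toFun := fun s => ⟨A.res h s.1, suppCond_res h s.2⟩
      map_zero' := Subtype.ext (map_zero _)
      map_add' := fun s t => Subtype.ext (map_add _ _ _) }
  res_id s := Subtype.ext (A.res_id s.1)
  res_res h1 h2 s := Subtype.ext (A.res_res h1 h2 s.1)
  res_smul h r m := Subtype.ext (A.res_smul h r m.1)
  sheaf := by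
    intro ι W V hW s compat
    obtain ⟨t, ht, hu⟩ := A.sheaf ι W V hW (fun i => (s i).1)
      (fun i j W' h1 h2 => congrArg Subtype.val (compat i j W' h1 h2))
    have htc : suppCond U A t := by
      intro x hx
      obtain ⟨i, hi⟩ := Opens.mem_iSup.mp (hW ▸ hx)
      obtain ⟨P, hxP, hPV, hP⟩ := (s i).2 x hi
      refine ⟨P, hxP, hPV.trans ((le_iSup V i).trans hW.ge), ?_⟩
      rcases hP with h1 | h1
      · exact Or.inl h1
      · refine Or.inr ?_
        rw [← res₂ A hPV ((le_iSup V i).trans hW.ge)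
          (hPV.trans ((le_iSup V i).trans hW.ge)) t,
          show A.res ((le_iSup V i).trans hW.ge) t = (s i).1 from ht i]
        exact h1
    exact ⟨⟨t, htc⟩, fun i => Subtype.ext (ht i),
      fun y hy => Subtype.ext (hu y.1 fun i => congrArg Subtype.val (hy i))⟩

/-- The canonical inclusion `ι_{U,!}(A|_U) ⟶ ι_{V,!}(A|_V)` for `U ≤ V`. -/
def shriekMap {U V : Opens X} (hUV : U ≤ V) (A : OMod O) : shriek U A ⟶ shriek V A where
  app W :=
    { toFun := fun s => ⟨s.1, fun x hx => (s.2 x hx).imp fun P hP =>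
        ⟨hP.1, hP.2.imp fun _ h => h.imp_left fun hU => hU.trans hUV⟩⟩
      map_add' := fun s t => Subtype.ext rfl
      map_smul' := fun r s => Subtype.ext rfl }
  naturality h m := Subtype.ext rfl

lemma shriekMap_isGPureMono {U V : Opens X} (hUV : U ≤ V) (A : OMod O) :
    IsGPureMono (shriekMap hUV A) := by
  constructor
  · intro W s t h
    have h' := congrArg Subtype.val h
    exact Subtype.ext h'
  · intro x
    by_cases hx : x ∈ U
    · apply isPureMono_of_bijective
      constructor
      · intro a b hab
        obtain ⟨N₁, s₁, rfl⟩ := germ_surj a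
        obtain ⟨N₂, s₂, rfl⟩ := germ_surj b
        rw [stalkMap_germ, stalkMap_germ] at hab
        obtain ⟨W, h₁, h₂, e⟩ := exists_of_germ_eq hab
        have e' := congrArg Subtype.val e
        exact germ_eq W h₁ h₂ (Subtype.ext e')
      · intro t
        obtain ⟨Nb, s, rfl⟩ := germ_surj t
        have hmem : x ∈ (U ⊓ Nb.U : Opens X) := ⟨hx, Nb.mem⟩
        have hcond : suppCond U A (A.res (inf_le_right : U ⊓ Nb.U ≤ Nb.U) s.1) :=
          fun y hy => ⟨U ⊓ Nb.U, hy, le_rfl, Or.inl inf_le_left⟩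
        refine ⟨germ ⟨U ⊓ Nb.U, hmem⟩ ⟨A.res inf_le_right s.1, hcond⟩, ?_⟩
        refine (stalkMap_germ _ _ _ _).trans ?_
        exact germ_eq ⟨U ⊓ Nb.U, hmem⟩ le_rfl (inf_le_right : U ⊓ Nb.U ≤ Nb.U)
          (Subtype.ext (A.res_id _))
    · have : Subsingleton (Stalk (shriek U A) x) := by
        have hzero : ∀ c : Stalk (shriek U A) x, c = 0 := by
          intro c
          obtain ⟨Nb, s, rfl⟩ := germ_surj c
          obtain ⟨P, hxP, hPW, hP⟩ := s.2 x Nb.mem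
          rcases hP with h | h
          · exact absurd (h hxP) hx
          · rw [← germ_res (N₁ := Nb) (N₂ := ⟨P, hxP⟩) hPW s,
              show (shriek U A).res hPW s = 0 from Subtype.ext h, germ_zero]
        exact ⟨fun a b => (hzero a).trans (hzero b).symm⟩
      exact isPureMono_of_subsingleton _

/-! ### Gluing: the adjunction `Hom(ι_{U,!}(A|_U), N) ≅ Hom(A|_U, N|_U)` -/

/-- `n` is the result of gluing `φ` applied to `s` over pieces inside `U` with `0`
elsewhere. -/
def Glue {U : Opens X} {A N : OMod O} (φ : HomOver U A N) {W : Opens X} (s : A.obj W)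
    (n : N.obj W) : Prop :=
  ∀ (W' : Opens X) (h1 : W' ≤ W),
    (∀ h2 : W' ≤ U, N.res h1 n = φ.app W' h2 (A.res h1 s)) ∧
    (A.res h1 s = 0 → N.res h1 n = 0)

/-- The index type of the canonical cover adapted to a supported section. -/
def glueIdx (U W : Opens X) (A : OMod O) (s : A.obj W) : Type u :=
  {P : Opens X // ∃ hPW : P ≤ W, P ≤ U ∨ A.res hPW s = 0}

lemma glueIdx_iSup {U W : Opens X} {A : OMod O} {s : A.obj W} (hs : suppCond U A s) :
    W = iSup (fun i : glueIdx U W A s => i.1) := by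
  apply le_antisymm
  · intro x hx
    obtain ⟨P, hxP, hPW, hP⟩ := hs x hx
    exact Opens.mem_iSup.mpr ⟨⟨P, hPW, hP⟩, hxP⟩
  · exact iSup_le fun i => i.2.choose

open Classical in
/-- The canonical family to be glued. -/
noncomputable def glueFam {U : Opens X} {A N : OMod O} (φ : HomOver U A N) {W : Opens X}
    (s : A.obj W) (i : glueIdx U W A s) : N.obj i.1 :=
  if h : i.1 ≤ U then φ.app i.1 h (A.res i.2.choose s) else 0

open Classical in
lemma glueFam_res {U : Opens X} {A N : OMod O} (φ : HomOver U A N) {W : Opens X}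
    {s : A.obj W} (i : glueIdx U W A s) {W' : Opens X} (hWk : W' ≤ i.1) (hW'W : W' ≤ W) :
    N.res hWk (glueFam φ s i) =
      if h : W' ≤ U then φ.app W' h (A.res hW'W s) else 0 := by
  by_cases hk : i.1 ≤ U
  · rw [show glueFam φ s i = φ.app i.1 hk (A.res i.2.choose s) from dif_pos hk,
        φ.naturality hk hWk, dif_pos (hWk.trans hk)]
    exact congrArg _ (res₂ A hWk i.2.choose hW'W s)
  · rw [show glueFam φ s i = 0 from dif_neg hk, map_zero]
    obtain ⟨hPW, hOr⟩ := i.2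
    rcases hOr with h | h0
    · exact absurd h hk
    by_cases hc : W' ≤ U
    · rw [dif_pos hc, show A.res hW'W s = 0 from by
        rw [← res₂ A hWk hPW hW'W s, h0, map_zero], map_zero]
    · rw [dif_neg hc]

lemma glue_existsUnique {U : Opens X} {A N : OMod O} (φ : HomOver U A N) {W : Opens X}
    {s : A.obj W} (hs : suppCond U A s) : ∃! n : N.obj W, Glue φ s n := by
  classical
  obtain ⟨t, ht, hu⟩ := N.sheaf (glueIdx U W A s) W (fun i => i.1) (glueIdx_iSup hs)
    (glueFam φ s)
    (fun i j W' hWi hWj =>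
      (glueFam_res φ i hWi (hWi.trans i.2.choose)).trans
        (glueFam_res φ j hWj (hWi.trans i.2.choose)).symm)
  refine ⟨t, ?_, fun n hn => hu n ?_⟩
  · intro W' h1
    refine ⟨fun h2 => ?_, fun h0 => ?_⟩
    · exact (ht ⟨W', h1, Or.inl h2⟩).trans
        (show glueFam φ s ⟨W', h1, Or.inl h2⟩ = φ.app W' h2 (A.res h1 s) from dif_pos h2)
    · by_cases hc : W' ≤ U
      · exact (ht ⟨W', h1, Or.inr h0⟩).trans
          ((show glueFam φ s ⟨W', h1, Or.inr h0⟩ = φ.app W' hc (A.res h1 s) from dif_pos hc).trans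
            ((congrArg (fun z => φ.app W' hc z) h0).trans (map_zero _)))
      · exact (ht ⟨W', h1, Or.inr h0⟩).trans
          (show glueFam φ s ⟨W', h1, Or.inr h0⟩ = (0 : N.obj W') from dif_neg hc)
  · intro i
    obtain ⟨P, hPW, hP⟩ := i
    by_cases hc : P ≤ U
    · rw [show glueFam φ s ⟨P, hPW, hP⟩ = φ.app P hc (A.res hPW s) from dif_pos hc]
      exact (hn P hPW).1 hc
    · rcases hP with h | h0
      · exact absurd h hc
      rw [show glueFam φ s ⟨P, hPW, Or.inr h0⟩ = (0 : N.obj P) from dif_neg hc]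
      exact (hn P hPW).2 h0

/-- The glued section: the value on supported sections of the morphism
`ι_{U,!}(A|_U) ⟶ N` induced by `φ : A|_U ⟶ N|_U`. -/
noncomputable def glueSec {U : Opens X} {A N : OMod O} (φ : HomOver U A N) {W : Opens X}
    (s : suppSub U A W) : N.obj W :=
  (glue_existsUnique φ s.2).choose

lemma glueSec_glue {U : Opens X} {A N : OMod O} (φ : HomOver U A N) {W : Opens X}
    (s : suppSub U A W) : Glue φ s.1 (glueSec φ s) :=
  (glue_existsUnique φ s.2).choose_spec.1

lemma glueSec_unique {U : Opens X} {A N : OMod O} (φ : HomOver U A N) {W : Opens X}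
    {s : suppSub U A W} {n : N.obj W} (hn : Glue φ s.1 n) : glueSec φ s = n :=
  ((glue_existsUnique φ s.2).choose_spec.2 n hn).symm

lemma glueSec_res_of_le {U : Opens X} {A N : OMod O} (φ : HomOver U A N) {W : Opens X}
    (s : suppSub U A W) {W' : Opens X} (h1 : W' ≤ W) (h2 : W' ≤ U) :
    N.res h1 (glueSec φ s) = φ.app W' h2 (A.res h1 s.1) :=
  (glueSec_glue φ s W' h1).1 h2

lemma glueSec_res_of_zero {U : Opens X} {A N : OMod O} (φ : HomOver U A N) {W : Opens X}
    (s : suppSub U A W) {W' : Opens X} (h1 : W' ≤ W) (h0 : A.res h1 s.1 = 0) :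
    N.res h1 (glueSec φ s) = 0 :=
  (glueSec_glue φ s W' h1).2 h0

lemma glueSec_add {U : Opens X} {A N : OMod O} (φ : HomOver U A N) {W : Opens X}
    (s t : suppSub U A W) : glueSec φ (s + t) = glueSec φ s + glueSec φ t := by
  apply glueSec_unique
  intro W' h1
  constructor
  · intro h2
    rw [map_add, glueSec_res_of_le φ s h1 h2, glueSec_res_of_le φ t h1 h2, ← map_add,
      show A.res h1 ((s + t : suppSub U A W) : A.obj W) = A.res h1 s.1 + A.res h1 t.1 from
        by rw [show ((s + t : suppSub U A W) : A.obj W) = s.1 + t.1 from rfl, map_add]]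
  · intro h0
    apply res_eq_of_cover N
      (fun i : {P : Opens X // ∃ hP : P ≤ W',
        (P ≤ U ∨ A.res (hP.trans h1) s.1 = 0) ∧ (P ≤ U ∨ A.res (hP.trans h1) t.1 = 0)} => i.1)
      (le_antisymm (by
        intro x hx
        obtain ⟨P₁, hx1, hP1, hs1⟩ := s.2 x (h1 hx)
        obtain ⟨P₂, hx2, hP2, hs2⟩ := t.2 x (h1 hx)
        refine Opens.mem_iSup.mpr ⟨⟨P₁ ⊓ P₂ ⊓ W', inf_le_right, ?_, ?_⟩, ⟨⟨hx1, hx2⟩, hx⟩⟩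
        · rcases hs1 with hc | hc
          · exact Or.inl ((inf_le_left.trans inf_le_left).trans hc)
          · exact Or.inr (by
              rw [← res₂ A (inf_le_left.trans inf_le_left) hP1
                ((inf_le_right : P₁ ⊓ P₂ ⊓ W' ≤ W').trans h1) s.1, hc, map_zero])
        · rcases hs2 with hc | hc
          · exact Or.inl ((inf_le_left.trans inf_le_right).trans hc)
          · exact Or.inr (by
              rw [← res₂ A (inf_le_left.trans inf_le_right) hP2
                ((inf_le_right : P₁ ⊓ P₂ ⊓ W' ≤ W').trans h1) t.1, hc, map_zero]))
        (iSup_le fun i => i.2.choose))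
    intro i
    have p : i.1 ≤ W' := i.2.choose
    show N.res p (N.res h1 (glueSec φ s + glueSec φ t)) = N.res p 0
    rw [map_zero, res₂ N p h1 (p.trans h1), map_add]
    by_cases hc : i.1 ≤ U
    · rw [glueSec_res_of_le φ s (p.trans h1) hc, glueSec_res_of_le φ t (p.trans h1) hc,
        ← map_add,
        show A.res (p.trans h1) s.1 + A.res (p.trans h1) t.1 =
            A.res p (A.res h1 ((s + t : suppSub U A W) : A.obj W)) from by
          rw [res₂ A p h1 (p.trans h1),
            show ((s + t : suppSub U A W) : A.obj W) = s.1 + t.1 from rfl, map_add],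
        h0, map_zero, map_zero]
    · obtain ⟨hP, hcs, hct⟩ := i.2
      rcases hcs with h | h0s
      · exact absurd h hc
      rcases hct with h | h0t
      · exact absurd h hc
      rw [glueSec_res_of_zero φ s (hP.trans h1) h0s,
        glueSec_res_of_zero φ t (hP.trans h1) h0t, add_zero]

lemma glueSec_smul {U : Opens X} {A N : OMod O} (φ : HomOver U A N) {W : Opens X}
    (r : O.obj W) (s : suppSub U A W) : glueSec φ (r • s) = r • glueSec φ s := by
  apply glueSec_unique
  intro W' h1
  constructor
  · intro h2
    rw [N.res_smul, glueSec_res_of_le φ s h1 h2, ← map_smul,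
      show O.res h1 r • A.res h1 s.1 = A.res h1 ((r • s : suppSub U A W) : A.obj W) from by
        rw [← A.res_smul,
          show ((r • s : suppSub U A W) : A.obj W) = r • (s : A.obj W) from rfl]]
  · intro h0
    apply res_eq_of_cover N
      (fun i : {P : Opens X // ∃ hP : P ≤ W', P ≤ U ∨ A.res (hP.trans h1) s.1 = 0} => i.1)
      (le_antisymm (by
        intro x hx
        obtain ⟨P₁, hx1, hP1, hs1⟩ := s.2 x (h1 hx)
        refine Opens.mem_iSup.mpr ⟨⟨P₁ ⊓ W', inf_le_right, ?_⟩, ⟨hx1, hx⟩⟩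
        rcases hs1 with hc | hc
        · exact Or.inl (inf_le_left.trans hc)
        · exact Or.inr (by
            rw [← res₂ A inf_le_left hP1 ((inf_le_right : P₁ ⊓ W' ≤ W').trans h1) s.1,
              hc, map_zero]))
        (iSup_le fun i => i.2.choose))
    intro i
    have p : i.1 ≤ W' := i.2.choose
    show N.res p (N.res h1 (r • glueSec φ s)) = N.res p 0
    rw [map_zero, res₂ N p h1 (p.trans h1), N.res_smul]
    by_cases hc : i.1 ≤ U
    · rw [glueSec_res_of_le φ s (p.trans h1) hc, ← map_smul,
        show O.res (p.trans h1) r • A.res (p.trans h1) s.1 =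
            A.res p (A.res h1 ((r • s : suppSub U A W) : A.obj W)) from by
          rw [res₂ A p h1 (p.trans h1), ← A.res_smul,
            show ((r • s : suppSub U A W) : A.obj W) = r • (s : A.obj W) from rfl],
        h0, map_zero, map_zero]
    · obtain ⟨hP, hcs⟩ := i.2
      rcases hcs with h | h0s
      · exact absurd h hc
      rw [glueSec_res_of_zero φ s (hP.trans h1) h0s, smul_zero]

lemma glueSec_res {U : Opens X} {A N : OMod O} (φ : HomOver U A N) {W W₂ : Opens X}
    (h : W₂ ≤ W) (s : suppSub U A W) :
    N.res h (glueSec φ s) = glueSec φ ((shriek U A).res h s) := by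
  refine (glueSec_unique φ ?_).symm
  intro W' h1
  constructor
  · intro h2
    rw [res₂ N h1 h (h1.trans h), glueSec_res_of_le φ s (h1.trans h) h2]
    exact congrArg _ (res₂ A h1 h (h1.trans h) s.1).symm
  · intro h0
    rw [res₂ N h1 h (h1.trans h)]
    apply glueSec_res_of_zero φ s (h1.trans h)
    rw [← res₂ A h1 h (h1.trans h) s.1]
    exact h0

lemma glueSec_eq_of_le {U : Opens X} {A N : OMod O} (φ : HomOver U A N) {W : Opens X}
    (hWU : W ≤ U) (s : suppSub U A W) : glueSec φ s = φ.app W hWU s.1 := by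
  apply glueSec_unique
  intro W' h1
  constructor
  · intro h2
    rw [φ.naturality hWU h1 s.1]
  · intro h0
    rw [φ.naturality hWU h1 s.1, h0, map_zero]

/-- The morphism `ι_{U,!}(A|_U) ⟶ N` induced by `φ : A|_U ⟶ N|_U`. -/
noncomputable def gluedHom {U : Opens X} {A N : OMod O} (φ : HomOver U A N) :
    shriek U A ⟶ N where
  app W :=
    { toFun := glueSec φ
      map_add' := fun s t => glueSec_add φ s t
      map_smul' := fun r s => glueSec_smul φ r s }
  naturality h m := glueSec_res φ h m

end SheafPurity

open SheafPurity in
/-- Let `X` be a ringed space, `N` a g-pure-injective `O_X`-module and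
`A` any `O_X`-module. Then the sheaf hom `𝓗om_X(A, N)` is flasque: for opens `U ≤ V`,
every section over `U` (i.e. every morphism `A|_U ⟶ N|_U`) extends to a section over
`V`. In particular `N ≅ 𝓗om(O_X, N)` itself is flasque: all its restriction maps are
surjective. -/
theorem sheafHom_into_gPureInjective_is_flasque
    {X : Type u} [TopologicalSpace X] (O : RingSheaf X) (N : OMod O)
    (hN : GPureInjective N) :
    (∀ (A : OMod O) (U V : Opens X) (h : U ≤ V) (φ : HomOver U A N),
      ∃ ψ : HomOver V A N, ∀ (W : Opens X) (hW : W ≤ U) (m : A.obj W),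
        ψ.app W (hW.trans h) m = φ.app W hW m) ∧
    (∀ (U V : Opens X) (h : U ≤ V), Function.Surjective (N.res h)) := by
  have key : ∀ (A : OMod O) (U V : Opens X) (h : U ≤ V) (φ : HomOver U A N),
      ∃ ψ : HomOver V A N, ∀ (W : Opens X) (hW : W ≤ U) (m : A.obj W),
        ψ.app W (hW.trans h) m = φ.app W hW m := by
    intro A U V hUV φ
    obtain ⟨Ψ, hΨ⟩ := hN (shriek U A) (shriek V A) (shriekMap hUV A)
      (shriekMap_isGPureMono hUV A) (gluedHom φ)
    have condV : ∀ (W : Opens X), W ≤ V → ∀ m : A.obj W, suppCond V A m :=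
      fun W hWV m x hx => ⟨W, hx, le_rfl, Or.inl hWV⟩
    refine ⟨⟨fun W hWV => (Hom.app Ψ W).comp
      ({ toFun := fun m => ⟨m, condV W hWV m⟩
         map_add' := fun a b => Subtype.ext rfl
         map_smul' := fun r a => Subtype.ext rfl } :
        A.obj W →ₗ[O.obj W] (shriek V A).obj W), ?_⟩, ?_⟩
    · intro V' W hV'V hWV' m
      show N.res hWV' (Hom.app Ψ V' ⟨m, condV V' hV'V m⟩) =
        Hom.app Ψ W ⟨A.res hWV' m, condV W (hWV'.trans hV'V) (A.res hWV' m)⟩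
      exact Hom.naturality Ψ hWV' ⟨m, condV V' hV'V m⟩
    · intro W hWU m
      show Hom.app Ψ W ⟨m, condV W (hWU.trans hUV) m⟩ = φ.app W hWU m
      have condU : suppCond U A m := fun x hx => ⟨W, hx, le_rfl, Or.inl hWU⟩
      have h1 : Hom.app (shriekMap hUV A ≫ Ψ) W ⟨m, condU⟩ =
          Hom.app (gluedHom φ) W ⟨m, condU⟩ := by rw [hΨ]
      have h2 : Hom.app Ψ W ⟨m, condV W (hWU.trans hUV) m⟩ =
          Hom.app (shriekMap hUV A ≫ Ψ) W ⟨m, condU⟩ := rfl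
      rw [h2, h1]
      show glueSec φ ⟨m, condU⟩ = φ.app W hWU m
      exact glueSec_eq_of_le φ hWU ⟨m, condU⟩
  refine ⟨key, ?_⟩
  intro U V hUV s
  have φnat : ∀ {V' W : Opens X} (hVU : V' ≤ U) (hWV : W ≤ V') (r : O.toOMod.obj V'),
      N.res hWV (r • N.res hVU s) =
        ((O.toOMod).res hWV r) • N.res (hWV.trans hVU) s := by
    intro V' W hVU hWV r
    rw [N.res_smul, N.res_res, toOMod_res]
  obtain ⟨ψ, hψ⟩ := key O.toOMod U V hUV
    ⟨fun W hW =>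
      { toFun := fun r => r • N.res hW s
        map_add' := fun a b => add_smul a b _
        map_smul' := fun c r => by
          show (c • r) • N.res hW s = c • (r • N.res hW s)
          rw [smul_eq_mul, mul_smul] },
     fun {V'} {W} hVU hWV r => φnat hVU hWV r⟩
  refine ⟨ψ.app V le_rfl 1, ?_⟩
  calc N.res hUV (ψ.app V le_rfl 1)
      = ψ.app U (hUV.trans le_rfl) ((O.toOMod).res hUV 1) := ψ.naturality le_rfl hUV 1
    _ = ψ.app U (le_rfl.trans hUV) 1 := by
        rw [show (O.toOMod).res hUV (1 : O.obj V) = (1 : O.obj U) from map_one (O.res hUV)]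
    _ = (1 : O.obj U) • N.res le_rfl s := hψ U le_rfl 1
    _ = s := by rw [one_smul, N.res_id]
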